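/- Let G=(V,E) be a connected finite graph with positive edge costs, let α ≥ 1, and let (U, V∖U) be an α-approximate minimum cut of G. Then there exists a subset S ⊆ U with |S| ≤ ⌊2α⌋+1 such that (U, V∖U) is the unique minimum (S, V∖U)-terminal cut of G. -/

import Mathlib

open Finset

variable {V : Type*} [Fintype V] [DecidableEq V]

/- The value of the cut `(U, Uᶜ)`: total cost of edges with exactly one endpoint in `U`. -/
open Classical in
noncomputable def cutVal (G : SimpleGraph V) (c : V → V → ℝ) (U : Finset V) : ℝ :=
  ∑ u ∈ U, ∑ v ∈ Uᶜ, if G.Adj u v then c u v else 0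

/-- `(X, Xᶜ)` is an `(S,T)`-terminal cut: `S ⊆ X ⊆ Tᶜ`. -/
def IsTerminalCut (S T X : Finset V) : Prop := S ⊆ X ∧ X ⊆ Tᶜ

/-- `(X, Xᶜ)` is a minimum `(S,T)`-terminal cut. -/
def IsMinTerminalCut (G : SimpleGraph V) (c : V → V → ℝ) (S T X : Finset V) : Prop :=
  IsTerminalCut S T X ∧ ∀ Y : Finset V, IsTerminalCut S T Y → cutVal G c X ≤ cutVal G c Y

/-- `(X, Xᶜ)` is the unique minimum `(S,T)`-terminal cut. -/
def IsUniqueMinTerminalCut (G : SimpleGraph V) (c : V → V → ℝ) (S T X : Finset V) : Prop :=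
  IsMinTerminalCut G c S T X ∧ ∀ Y : Finset V, IsMinTerminalCut G c S T Y → Y = X

set_option linter.unusedSectionVars false

section AuxiliaryLemmas

namespace AMCAux

open Classical in
noncomputable def wFun (G : SimpleGraph V) (c : V → V → ℝ) (u v : V) : ℝ :=
  if G.Adj u v then c u v else 0

lemma cutVal_eq_sum (G : SimpleGraph V) (c : V → V → ℝ) (A : Finset V) :
    cutVal G c A = ∑ u ∈ A, ∑ v ∈ Aᶜ, wFun G c u v := rfl

lemma wFun_nonneg (G : SimpleGraph V) (c : V → V → ℝ)
    (hc : ∀ u v, G.Adj u v → 0 < c u v) (u v : V) : 0 ≤ wFun G c u v := by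
  unfold wFun
  split
  · exact (hc u v ‹_›).le
  · exact le_refl 0

lemma wFun_symm (G : SimpleGraph V) (c : V → V → ℝ)
    (hcs : ∀ u v, c u v = c v u) (u v : V) : wFun G c u v = wFun G c v u := by
  unfold wFun
  by_cases h : G.Adj u v
  · rw [if_pos h, if_pos h.symm, hcs u v]
  · rw [if_neg h, if_neg (fun h' => h h'.symm)]

lemma wFun_self (G : SimpleGraph V) (c : V → V → ℝ) (u : V) : wFun G c u u = 0 := by
  unfold wFun
  rw [if_neg (G.irrefl)]

noncomputable def betaW (G : SimpleGraph V) (c : V → V → ℝ) (U A : Finset V) : ℝ :=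
  ∑ x ∈ A, ∑ y ∈ U \ A, wFun G c x y

noncomputable def gamW (G : SimpleGraph V) (c : V → V → ℝ) (U A : Finset V) : ℝ :=
  ∑ x ∈ A, ∑ y ∈ Uᶜ, wFun G c x y

lemma gamW_nonneg (G : SimpleGraph V) (c : V → V → ℝ)
    (hc : ∀ u v, G.Adj u v → 0 < c u v) (U A : Finset V) : 0 ≤ gamW G c U A :=
  Finset.sum_nonneg fun x _ => Finset.sum_nonneg fun y _ => wFun_nonneg G c hc x y

lemma betaW_empty (G : SimpleGraph V) (c : V → V → ℝ) (U : Finset V) :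
    betaW G c U ∅ = 0 := by simp [betaW]

lemma gamW_empty (G : SimpleGraph V) (c : V → V → ℝ) (U : Finset V) :
    gamW G c U ∅ = 0 := by simp [gamW]

lemma cutVal_split (G : SimpleGraph V) (c : V → V → ℝ) (U A : Finset V) (hA : A ⊆ U) :
    cutVal G c A = betaW G c U A + gamW G c U A := by
  rw [cutVal_eq_sum]
  have hcompl : Aᶜ = (U \ A) ∪ Uᶜ := by
    ext v
    simp only [Finset.mem_compl, Finset.mem_union, Finset.mem_sdiff]
    constructor
    · intro hv
      by_cases hU : v ∈ U
      · exact Or.inl ⟨hU, hv⟩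
      · exact Or.inr hU
    · rintro (⟨_, hv⟩ | hv)
      · exact hv
      · exact fun hA' => hv (hA hA')
  have hdisj : Disjoint (U \ A) Uᶜ := by
    rw [Finset.disjoint_left]
    intro v hv hv'
    exact (Finset.mem_compl.mp hv') (Finset.mem_sdiff.mp hv).1
  rw [hcompl]
  rw [show (∑ u ∈ A, ∑ v ∈ (U \ A) ∪ Uᶜ, wFun G c u v)
      = ∑ u ∈ A, ((∑ v ∈ U \ A, wFun G c u v) + ∑ v ∈ Uᶜ, wFun G c u v) from
    Finset.sum_congr rfl fun u _ => Finset.sum_union hdisj]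
  rw [Finset.sum_add_distrib]
  rfl

lemma sum_swap_w (G : SimpleGraph V) (c : V → V → ℝ) (hcs : ∀ u v, c u v = c v u)
    (A B : Finset V) :
    ∑ x ∈ A, ∑ y ∈ B, wFun G c x y = ∑ x ∈ B, ∑ y ∈ A, wFun G c x y := by
  rw [Finset.sum_comm]
  exact Finset.sum_congr rfl fun x _ => Finset.sum_congr rfl fun y _ => wFun_symm G c hcs y x

lemma cutVal_compare (G : SimpleGraph V) (c : V → V → ℝ) (hcs : ∀ u v, c u v = c v u)
    (U X : Finset V) (hX : X ⊆ U) :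
    cutVal G c X = cutVal G c U + (betaW G c U (U \ X) - gamW G c U (U \ X)) := by
  have h1 := cutVal_split G c U X hX
  have h2 := cutVal_split G c U U (Finset.Subset.refl U)
  have hbU : betaW G c U U = 0 := by simp [betaW]
  have hgsplit : gamW G c U U = gamW G c U (U \ X) + gamW G c U X := by
    unfold gamW
    rw [← Finset.sum_sdiff hX]
  have hbx : betaW G c U X = betaW G c U (U \ X) := by
    unfold betaW
    rw [Finset.sdiff_sdiff_eq_self hX]
    exact sum_swap_w G c hcs X (U \ X)
  rw [h1, hbx]
  rw [h2, hbU] 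
  linarith [hgsplit]

end AMCAux

namespace AMCAux

lemma walk_cross (G : SimpleGraph V) (W : Finset V) :
    ∀ {u v : V}, G.Walk u v → u ∈ W → v ∉ W → ∃ a b, a ∈ W ∧ b ∉ W ∧ G.Adj a b := by
  intro u v p
  induction p with
  | nil => intro h1 h2; exact absurd h1 h2
  | cons hadj q ih =>
    intro h1 h2
    rename_i a b c'
    by_cases hb : b ∈ W
    · exact ih hb h2
    · exact ⟨a, b, h1, hb, hadj⟩

lemma exists_crossing_edge (G : SimpleGraph V) (hG : G.Connected) (W : Finset V)
    (h1 : W.Nonempty) (h2 : W ≠ Finset.univ) : ∃ a b, a ∈ W ∧ b ∉ W ∧ G.Adj a b := by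
  obtain ⟨u, hu⟩ := h1
  have : ∃ v, v ∉ W := by
    by_contra h
    push_neg at h
    exact h2 (Finset.eq_univ_iff_forall.mpr h)
  obtain ⟨v, hv⟩ := this
  obtain ⟨p⟩ := hG.preconnected u v
  exact walk_cross G W p hu hv

lemma lam_le_cutVal (G : SimpleGraph V) (c : V → V → ℝ) (lam : ℝ)
    (hlam : IsLeast {x : ℝ | ∃ W : Finset V, W.Nonempty ∧ W ≠ Finset.univ ∧ cutVal G c W = x} lam)
    (A : Finset V) (h1 : A.Nonempty) (h2 : A ≠ Finset.univ) : lam ≤ cutVal G c A :=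
  hlam.2 ⟨A, h1, h2, rfl⟩

lemma lam_pos (G : SimpleGraph V) (hG : G.Connected) (c : V → V → ℝ)
    (hc : ∀ u v, G.Adj u v → 0 < c u v) (lam : ℝ)
    (hlam : IsLeast {x : ℝ | ∃ W : Finset V, W.Nonempty ∧ W ≠ Finset.univ ∧ cutVal G c W = x} lam) :
    0 < lam := by
  obtain ⟨W0, hW0a, hW0b, hW0c⟩ := hlam.1
  rw [← hW0c]
  obtain ⟨a, b, ha, hb, hab⟩ := exists_crossing_edge G hG W0 hW0a hW0b
  have h1 : wFun G c a b ≤ ∑ y ∈ W0ᶜ, wFun G c a y :=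
    Finset.single_le_sum (fun y _ => wFun_nonneg G c hc a y) (Finset.mem_compl.mpr hb)
  have h2 : (∑ y ∈ W0ᶜ, wFun G c a y) ≤ cutVal G c W0 := by
    rw [cutVal_eq_sum]
    exact Finset.single_le_sum
      (fun x _ => Finset.sum_nonneg fun y _ => wFun_nonneg G c hc x y) ha
  have h3 : 0 < wFun G c a b := by
    unfold wFun
    rw [if_pos hab]
    exact hc a b hab
  linarith

lemma sum_count_mul {ι : Type*} (U : Finset V) (T : Finset ι)
    (Z : ι → Finset V) (hZ : ∀ i ∈ T, Z i ⊆ U) (g : V → ℝ) :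
    ∑ i ∈ T, ∑ x ∈ Z i, g x
      = ∑ x ∈ U, (((T.filter fun i => x ∈ Z i).card : ℝ) * g x) := by
  classical
  have h1 : ∀ i ∈ T, ∑ x ∈ Z i, g x = ∑ x ∈ U, if x ∈ Z i then g x else 0 := by
    intro i hi
    rw [← Finset.sum_filter]
    congr 1
    ext x
    simp only [Finset.mem_filter]
    exact ⟨fun h => ⟨hZ i hi h, h⟩, fun h => h.2⟩
  calc ∑ i ∈ T, ∑ x ∈ Z i, g x
      = ∑ i ∈ T, ∑ x ∈ U, if x ∈ Z i then g x else 0 := Finset.sum_congr rfl h1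
    _ = ∑ x ∈ U, ∑ i ∈ T, if x ∈ Z i then g x else 0 := Finset.sum_comm
    _ = ∑ x ∈ U, (((T.filter fun i => x ∈ Z i).card : ℝ) * g x) := by
        refine Finset.sum_congr rfl fun x _ => ?_
        rw [← Finset.sum_filter, Finset.sum_const, nsmul_eq_mul]

lemma sum_count_mul2 {ι : Type*} (U : Finset V) (T : Finset ι)
    (Z : ι → Finset V) (hZ : ∀ i ∈ T, Z i ⊆ U) (f : V → V → ℝ) :
    ∑ i ∈ T, ∑ x ∈ Z i, ∑ y ∈ U \ Z i, f x y
      = ∑ x ∈ U, ∑ y ∈ U, (((T.filter fun i => x ∈ Z i ∧ y ∉ Z i).card : ℝ) * f x y) := by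
  classical
  have h1 : ∀ i ∈ T, ∑ x ∈ Z i, ∑ y ∈ U \ Z i, f x y
      = ∑ x ∈ U, ∑ y ∈ U, if x ∈ Z i ∧ y ∉ Z i then f x y else 0 := by
    intro i hi
    have e1 : ∀ x, ∑ y ∈ U \ Z i, f x y = ∑ y ∈ U, if y ∉ Z i then f x y else 0 := by
      intro x
      rw [← Finset.sum_filter]
      congr 1
      exact Finset.sdiff_eq_filter U (Z i)
    have e0 : ∑ x ∈ Z i, ∑ y ∈ U \ Z i, f x y
        = ∑ x ∈ U, if x ∈ Z i then (∑ y ∈ U \ Z i, f x y) else 0 := by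
      rw [← Finset.sum_filter]
      congr 1
      ext x
      simp only [Finset.mem_filter]
      exact ⟨fun h => ⟨hZ i hi h, h⟩, fun h => h.2⟩
    rw [e0]
    refine Finset.sum_congr rfl fun x _ => ?_
    by_cases hx : x ∈ Z i
    · rw [if_pos hx, e1 x]
      exact Finset.sum_congr rfl fun y _ => by by_cases hy : y ∈ Z i <;> simp [hx, hy]
    · rw [if_neg hx]
      symm
      exact Finset.sum_eq_zero fun y _ => by simp [hx]
  calc ∑ i ∈ T, ∑ x ∈ Z i, ∑ y ∈ U \ Z i, f x y
      = ∑ i ∈ T, ∑ x ∈ U, ∑ y ∈ U, if x ∈ Z i ∧ y ∉ Z i then f x y else 0 :=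
        Finset.sum_congr rfl h1
    _ = ∑ x ∈ U, ∑ i ∈ T, ∑ y ∈ U, if x ∈ Z i ∧ y ∉ Z i then f x y else 0 := Finset.sum_comm
    _ = ∑ x ∈ U, ∑ y ∈ U, ∑ i ∈ T, if x ∈ Z i ∧ y ∉ Z i then f x y else 0 :=
        Finset.sum_congr rfl fun x _ => Finset.sum_comm
    _ = ∑ x ∈ U, ∑ y ∈ U, (((T.filter fun i => x ∈ Z i ∧ y ∉ Z i).card : ℝ) * f x y) := by
        refine Finset.sum_congr rfl fun x _ => Finset.sum_congr rfl fun y _ => ?_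
        rw [← Finset.sum_filter, Finset.sum_const, nsmul_eq_mul]

end AMCAux

namespace AMCAux

lemma key_pair_nat (a b : Finset V) (N : ℕ) (haN : a.card ≤ N) (hbN : b.card ≤ N) :
    ((if a.card = 1 ∧ a ≠ b then 1 else 0) + (if b.card = 1 ∧ b ≠ a then 1 else 0)
      + ((a.card + 1) - max 3 (b.card + 1)) + ((b.card + 1) - max 3 (a.card + 1)))
      ≤ (a \ b).card + (b \ a).card := by
  classical
  by_cases hab : a = b
  · subst hab
    have h : (a.card + 1) - max 3 (a.card + 1) = 0 := by
      rcases Nat.le_total (a.card + 1) 3 with h | h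
      · rw [Nat.max_eq_left h]; omega
      · rw [Nat.max_eq_right h]; omega
    rw [if_neg (by simp), h]
    simp
  · have h1 := Finset.card_sdiff_add_card_inter a b
    have h2 := Finset.card_sdiff_add_card_inter b a
    have h3 : (b ∩ a).card = (a ∩ b).card := by rw [Finset.inter_comm]
    have hsing : a.card = 1 → b.card = 1 → (a ∩ b).card = 0 := by
      intro ha1 hb1
      by_contra h
      obtain ⟨e, he⟩ := Finset.card_pos.mp (Nat.pos_of_ne_zero h)
      obtain ⟨u, hu⟩ := Finset.card_eq_one.mp ha1
      obtain ⟨v, hv⟩ := Finset.card_eq_one.mp hb1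
      rw [Finset.mem_inter] at he
      apply hab
      have h4 : e = u := by rw [hu] at he; simpa using he.1
      have h5 : e = v := by rw [hv] at he; simpa using he.2
      rw [hu, hv, ← h4, ← h5]
    have hba : b ≠ a := fun h => hab h.symm
    have hmaxa : max 3 (a.card + 1) = 3 ∨ max 3 (a.card + 1) = a.card + 1 := by
      rcases Nat.le_total (a.card + 1) 3 with h | h
      · exact Or.inl (Nat.max_eq_left h)
      · exact Or.inr (Nat.max_eq_right h)
    have hmaxb : max 3 (b.card + 1) = 3 ∨ max 3 (b.card + 1) = b.card + 1 := by
      rcases Nat.le_total (b.card + 1) 3 with h | h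
      · exact Or.inl (Nat.max_eq_left h)
      · exact Or.inr (Nat.max_eq_right h)
    have hmaxa' : a.card + 1 ≤ max 3 (a.card + 1) := Nat.le_max_right _ _
    have hmaxb' : b.card + 1 ≤ max 3 (b.card + 1) := Nat.le_max_right _ _
    have hmaxa3 : 3 ≤ max 3 (a.card + 1) := Nat.le_max_left _ _
    have hmaxb3 : 3 ≤ max 3 (b.card + 1) := Nat.le_max_left _ _
    by_cases ha1 : a.card = 1 <;> by_cases hb1 : b.card = 1
    · have h0 := hsing ha1 hb1
      rw [if_pos ⟨ha1, hab⟩, if_pos ⟨hb1, hba⟩]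
      omega
    · rw [if_pos ⟨ha1, hab⟩, if_neg (by tauto)]
      omega
    · rw [if_neg (by tauto), if_pos ⟨hb1, hba⟩]
      omega
    · rw [if_neg (by tauto), if_neg (by tauto)]
      omega

lemma key_vertex_nat (p m cN : ℕ) (hp : p = if m = 1 then 1 else 0)
    (hcN : cN = m + 1 - 3) : p + m ≤ cN + 2 := by
  subst hp hcN
  split_ifs <;> omega

end AMCAux

namespace AMCAux

def sigF (S : Finset V) (Ys : V → Finset V) (x : V) : Finset V :=
  S.filter (fun s => x ∈ Ys s)

def mF (S : Finset V) (Ys : V → Finset V) (x : V) : ℕ := (sigF S Ys x).card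

def PF (U S : Finset V) (Ys : V → Finset V) (s : V) : Finset V :=
  U.filter (fun x => sigF S Ys x = {s})

def RF (U S : Finset V) (Ys : V → Finset V) (j : ℕ) : Finset V :=
  U.filter (fun x => j ≤ mF S Ys x)

omit [Fintype V] in
lemma mF_le (S : Finset V) (Ys : V → Finset V) (x : V) : mF S Ys x ≤ S.card :=
  Finset.card_le_card (Finset.filter_subset _ _)

omit [Fintype V] in
lemma sigF_of_mem (S : Finset V) (Ys : V → Finset V)
    (h3 : ∀ s ∈ S, s ∈ Ys s) (h4 : ∀ s ∈ S, ∀ t ∈ S, t ∈ Ys s → t = s)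
    (s : V) (hs : s ∈ S) : sigF S Ys s = {s} := by
  ext t
  simp only [sigF, Finset.mem_filter, Finset.mem_singleton]
  constructor
  · rintro ⟨htS, hsYt⟩
    exact (h4 t htS s hs hsYt).symm
  · rintro rfl
    exact ⟨hs, h3 _ hs⟩

omit [Fintype V] in
lemma nn_eq (S : Finset V) (Ys : V → Finset V) (x y : V) :
    (S.filter fun i => x ∈ Ys i ∧ y ∉ Ys i).card = (sigF S Ys x \ sigF S Ys y).card := by
  congr 1
  ext s
  simp only [sigF, Finset.mem_filter, Finset.mem_sdiff]
  tauto

omit [Fintype V] in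
lemma pp_eq (U S : Finset V) (Ys : V → Finset V) (x : V) (hx : x ∈ U) :
    (S.filter fun i => x ∈ PF U S Ys i).card = (if mF S Ys x = 1 then 1 else 0) := by
  by_cases hm : mF S Ys x = 1
  · obtain ⟨s0, hs0⟩ := Finset.card_eq_one.mp hm
    have hs0S : s0 ∈ S := by
      have h : s0 ∈ sigF S Ys x := hs0 ▸ Finset.mem_singleton_self s0
      exact (Finset.mem_filter.mp h).1
    rw [if_pos hm]
    have hset : S.filter (fun i => x ∈ PF U S Ys i) = {s0} := by
      rw [Finset.eq_singleton_iff_unique_mem]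
      constructor
      · exact Finset.mem_filter.mpr ⟨hs0S, Finset.mem_filter.mpr ⟨hx, hs0⟩⟩
      · intro t ht
        have h1 := (Finset.mem_filter.mp ht).2
        have hsig := (Finset.mem_filter.mp h1).2
        rw [hs0] at hsig
        exact (Finset.singleton_inj.mp hsig).symm
    rw [hset, Finset.card_singleton]
  · rw [if_neg hm, Finset.card_eq_zero, Finset.eq_empty_iff_forall_notMem]
    intro t ht
    have h1 := (Finset.mem_filter.mp ht).2
    exact hm (by rw [mF, (Finset.mem_filter.mp h1).2, Finset.card_singleton])

omit [Fintype V] in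
lemma qq_eq (U S : Finset V) (Ys : V → Finset V) (x y : V) (hx : x ∈ U) (hy : y ∈ U) :
    (S.filter fun i => x ∈ PF U S Ys i ∧ y ∉ PF U S Ys i).card
      = (if mF S Ys x = 1 ∧ sigF S Ys x ≠ sigF S Ys y then 1 else 0) := by
  by_cases hm : mF S Ys x = 1
  · obtain ⟨s0, hs0⟩ := Finset.card_eq_one.mp hm
    have hs0S : s0 ∈ S := by
      have h : s0 ∈ sigF S Ys x := hs0 ▸ Finset.mem_singleton_self s0
      exact (Finset.mem_filter.mp h).1
    by_cases hxy : sigF S Ys x = sigF S Ys y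
    · rw [if_neg (by tauto), Finset.card_eq_zero, Finset.eq_empty_iff_forall_notMem]
      intro t ht
      obtain ⟨htS, hxP, hyP⟩ := Finset.mem_filter.mp ht
      have hsig := (Finset.mem_filter.mp hxP).2
      exact hyP (Finset.mem_filter.mpr ⟨hy, by rw [← hxy]; exact hsig⟩)
    · rw [if_pos ⟨hm, hxy⟩]
      have hyP : y ∉ PF U S Ys s0 := by
        intro hyP
        have hsy := (Finset.mem_filter.mp hyP).2
        exact hxy (by rw [hs0, hsy])
      have hset : S.filter (fun i => x ∈ PF U S Ys i ∧ y ∉ PF U S Ys i) = {s0} := by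
        rw [Finset.eq_singleton_iff_unique_mem]
        constructor
        · exact Finset.mem_filter.mpr ⟨hs0S, Finset.mem_filter.mpr ⟨hx, hs0⟩, hyP⟩
        · intro t ht
          have h1 := (Finset.mem_filter.mp ht).2.1
          have hsig := (Finset.mem_filter.mp h1).2
          rw [hs0] at hsig
          exact (Finset.singleton_inj.mp hsig).symm
      rw [hset, Finset.card_singleton]
  · rw [if_neg (by tauto), Finset.card_eq_zero, Finset.eq_empty_iff_forall_notMem]
    intro t ht
    obtain ⟨htS, hxP, -⟩ := Finset.mem_filter.mp ht
    exact hm (by rw [mF, (Finset.mem_filter.mp hxP).2, Finset.card_singleton])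

omit [Fintype V] in
lemma cc_eq (U S : Finset V) (Ys : V → Finset V) (x : V) (hx : x ∈ U) :
    ((Finset.Icc 3 S.card).filter fun j => x ∈ RF U S Ys j).card = mF S Ys x + 1 - 3 := by
  have hmx := mF_le S Ys x
  have hset : (Finset.Icc 3 S.card).filter (fun j => x ∈ RF U S Ys j)
      = Finset.Icc 3 (mF S Ys x) := by
    ext j
    simp only [RF, Finset.mem_filter, Finset.mem_Icc, hx, true_and]
    omega
  rw [hset, Nat.card_Icc]

omit [Fintype V] in
lemma rr_eq (U S : Finset V) (Ys : V → Finset V) (x y : V) (hx : x ∈ U) (hy : y ∈ U) :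
    ((Finset.Icc 3 S.card).filter fun j => x ∈ RF U S Ys j ∧ y ∉ RF U S Ys j).card
      = (mF S Ys x + 1) - max 3 (mF S Ys y + 1) := by
  have hmx := mF_le S Ys x
  have hset : (Finset.Icc 3 S.card).filter (fun j => x ∈ RF U S Ys j ∧ y ∉ RF U S Ys j)
      = Finset.Icc (max 3 (mF S Ys y + 1)) (mF S Ys x) := by
    ext j
    simp only [RF, Finset.mem_filter, Finset.mem_Icc, hx, hy, true_and, not_and,
      Nat.max_le, not_le]
    omega
  rw [hset, Nat.card_Icc]

lemma key_pair_cards (U S : Finset V) (Ys : V → Finset V) (x y : V) (hx : x ∈ U) (hy : y ∈ U) :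
    (S.filter fun i => x ∈ PF U S Ys i ∧ y ∉ PF U S Ys i).card
      + (S.filter fun i => y ∈ PF U S Ys i ∧ x ∉ PF U S Ys i).card
      + (((Finset.Icc 3 S.card).filter fun j => x ∈ RF U S Ys j ∧ y ∉ RF U S Ys j).card
        + ((Finset.Icc 3 S.card).filter fun j => y ∈ RF U S Ys j ∧ x ∉ RF U S Ys j).card)
      ≤ (S.filter fun i => x ∈ Ys i ∧ y ∉ Ys i).card
        + (S.filter fun i => y ∈ Ys i ∧ x ∉ Ys i).card := by
  rw [qq_eq U S Ys x y hx hy, qq_eq U S Ys y x hy hx, rr_eq U S Ys x y hx hy,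
    rr_eq U S Ys y x hy hx, nn_eq S Ys x y, nn_eq S Ys y x]
  have h := key_pair_nat (sigF S Ys x) (sigF S Ys y) S.card (mF_le S Ys x) (mF_le S Ys y)
  simp only [mF] at *
  rw [← add_assoc]; exact h

end AMCAux

end AuxiliaryLemmas

open AMCAux in
/-- Every α-approximate minimum cut (U, Uᶜ) of a connected graph is the unique minimum
(S, Uᶜ)-terminal cut for some S ⊆ U of size at most ⌊2α⌋+1. -/
theorem approx_min_cut_unique_S_complement_terminal_cut
    (G : SimpleGraph V) (hG : G.Connected)
    (c : V → V → ℝ) (hc : ∀ u v, G.Adj u v → 0 < c u v) (hcsymm : ∀ u v, c u v = c v u)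
    (α : ℝ) (hα : 1 ≤ α) (lam : ℝ)
    (hlam : IsLeast {x : ℝ | ∃ W : Finset V, W.Nonempty ∧ W ≠ Finset.univ ∧ cutVal G c W = x} lam)
    (U : Finset V) (hUne : U.Nonempty) (hUp : U ≠ Finset.univ)
    (happrox : cutVal G c U ≤ α * lam) :
    ∃ S : Finset V, S ⊆ U ∧ S.Nonempty ∧ S.card ≤ ⌊2 * α⌋₊ + 1 ∧
      IsUniqueMinTerminalCut G c S Uᶜ U := by
  classical
  have hlam_pos : 0 < lam := lam_pos G hG c hc lam hlam
  -- the "transversal" predicate: T hits every subset of U that gives a cut no larger than U's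
  let Tr : Finset V → Prop := fun T => ∀ A : Finset V, A ⊆ U → A.Nonempty →
      betaW G c U A - gamW G c U A ≤ 0 → (A ∩ T).Nonempty
  have hTrU : Tr U := by
    intro A hA hne _
    rwa [Finset.inter_eq_left.mpr hA]
  -- pick a transversal S of minimum cardinality
  let fam : Finset (Finset V) := Finset.univ.powerset.filter (fun T => T ⊆ U ∧ Tr T)
  have hfamne : fam.Nonempty := by
    refine ⟨U, ?_⟩
    simp only [fam, Finset.mem_filter, Finset.mem_powerset]
    exact ⟨Finset.subset_univ U, Finset.Subset.refl U, hTrU⟩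
  obtain ⟨S, hSfam, hSmin⟩ := Finset.exists_min_image fam Finset.card hfamne
  have hSU : S ⊆ U := by
    have := Finset.mem_filter.mp hSfam
    exact this.2.1
  have hTrS : Tr S := by
    have := Finset.mem_filter.mp hSfam
    exact this.2.2
  -- uniqueness of U as min (S, Uᶜ)-terminal cut
  have hUterm : IsTerminalCut S Uᶜ U := ⟨hSU, by rw [compl_compl]⟩
  have hgt : ∀ X : Finset V, IsTerminalCut S Uᶜ X → X ≠ U →
      cutVal G c U < cutVal G c X := by
    rintro X ⟨hSX, hXU'⟩ hne
    have hXU : X ⊆ U := by rwa [compl_compl] at hXU'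
    have hYne : (U \ X).Nonempty := by
      rw [Finset.sdiff_nonempty]
      intro h
      exact hne (Finset.Subset.antisymm hXU h)
    have hYS : (U \ X) ∩ S = ∅ := by
      rw [Finset.eq_empty_iff_forall_notMem]
      intro t ht
      rw [Finset.mem_inter, Finset.mem_sdiff] at ht
      exact ht.1.2 (hSX ht.2)
    have hphi : ¬ (betaW G c U (U \ X) - gamW G c U (U \ X) ≤ 0) := by
      intro hle
      have := hTrS (U \ X) (Finset.sdiff_subset) hYne hle
      rw [hYS] at this
      exact Finset.not_nonempty_empty this
    push_neg at hphi
    rw [cutVal_compare G c hcsymm U X hXU]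
    linarith
  have hunique : IsUniqueMinTerminalCut G c S Uᶜ U := by
    refine ⟨⟨hUterm, ?_⟩, ?_⟩
    · intro Y hY
      by_cases hYU : Y = U
      · subst hYU; exact le_refl _
      · exact (hgt Y hY hYU).le
    · intro Y hYmin
      by_contra hne
      have h1 := hgt Y hYmin.1 hne
      have h2 := hYmin.2 U hUterm
      linarith
  -- witnesses for minimality of S
  have hwit : ∀ s ∈ S, ∃ A : Finset V, A ⊆ U ∧
      betaW G c U A - gamW G c U A ≤ 0 ∧ s ∈ A ∧ (∀ t ∈ S, t ∈ A → t = s) := by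
    intro s hs
    have hnotTr : ¬ Tr (S.erase s) := by
      intro hTr
      have hmem : S.erase s ∈ fam := by
        simp only [fam, Finset.mem_filter, Finset.mem_powerset]
        exact ⟨Finset.subset_univ _, (Finset.erase_subset s S).trans hSU, hTr⟩
      have h1 := hSmin _ hmem
      have h2 : (S.erase s).card = S.card - 1 := Finset.card_erase_of_mem hs
      have h3 : 0 < S.card := Finset.card_pos.mpr ⟨s, hs⟩
      omega
    simp only [Tr] at hnotTr
    push_neg at hnotTr
    obtain ⟨A, hA1, hA2, hA3, hA4⟩ := hnotTr
    have hAS : (A ∩ S).Nonempty := hTrS A hA1 hA2 hA3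
    obtain ⟨t, ht⟩ := hAS
    rw [Finset.mem_inter] at ht
    have hts : ∀ t' ∈ S, t' ∈ A → t' = s := by
      intro t' ht'S ht'A
      by_contra h
      have : t' ∈ A ∩ S.erase s :=
        Finset.mem_inter.mpr ⟨ht'A, Finset.mem_erase.mpr ⟨h, ht'S⟩⟩
      rw [hA4] at this
      exact Finset.notMem_empty t' this
    have hsA : s ∈ A := by
      have h := hts t ht.2 ht.1
      exact h ▸ ht.1
    exact ⟨A, hA1, hA3, hsA, hts⟩
  choose! Ys hY1 hY2 hY3 hY4 using hwit
  -- the counting bound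
  have hcard : (S.card : ℝ) * lam ≤ 2 * cutVal G c U := by
    have hY3' : ∀ s ∈ S, s ∈ Ys s := hY3
    have hY4' : ∀ s ∈ S, ∀ t ∈ S, t ∈ Ys s → t = s := hY4
    have hPsubU : ∀ s ∈ S, PF U S Ys s ⊆ U := fun s _ => Finset.filter_subset _ _
    have hRsubU : ∀ j ∈ Finset.Icc 3 S.card, RF U S Ys j ⊆ U :=
      fun j _ => Finset.filter_subset _ _
    have hPmem : ∀ s ∈ S, s ∈ PF U S Ys s := by
      intro s hs
      exact Finset.mem_filter.mpr ⟨hSU hs, sigF_of_mem S Ys hY3' hY4' s hs⟩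
    have hlamP : ∀ s ∈ S, lam ≤ cutVal G c (PF U S Ys s) := by
      intro s hs
      refine lam_le_cutVal G c lam hlam _ ⟨s, hPmem s hs⟩ ?_
      intro h
      exact hUp (Finset.univ_subset_iff.mp (h ▸ (Finset.filter_subset _ U)))
    have step1 : (S.card : ℝ) * lam ≤ ∑ s ∈ S, cutVal G c (PF U S Ys s) := by
      have h := Finset.sum_le_sum hlamP
      rwa [Finset.sum_const, nsmul_eq_mul] at h
    have step2 : ∑ s ∈ S, cutVal G c (PF U S Ys s) ≤ 2 * cutVal G c U := by
      have E1 : ∑ s ∈ S, betaW G c U (Ys s)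
          = ∑ x ∈ U, ∑ y ∈ U,
              (((S.filter fun i => x ∈ Ys i ∧ y ∉ Ys i).card : ℝ) * wFun G c x y) :=
        sum_count_mul2 U S Ys hY1 (wFun G c)
      have E2 : ∑ s ∈ S, gamW G c U (Ys s)
          = ∑ x ∈ U, (((S.filter fun i => x ∈ Ys i).card : ℝ) * ∑ y ∈ Uᶜ, wFun G c x y) :=
        sum_count_mul U S Ys hY1 (fun x => ∑ y ∈ Uᶜ, wFun G c x y)
      have E3 : ∑ s ∈ S, betaW G c U (PF U S Ys s)
          = ∑ x ∈ U, ∑ y ∈ U,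
              (((S.filter fun i => x ∈ PF U S Ys i ∧ y ∉ PF U S Ys i).card : ℝ) * wFun G c x y) :=
        sum_count_mul2 U S (PF U S Ys) hPsubU (wFun G c)
      have E4 : ∑ s ∈ S, gamW G c U (PF U S Ys s)
          = ∑ x ∈ U, (((S.filter fun i => x ∈ PF U S Ys i).card : ℝ) * ∑ y ∈ Uᶜ, wFun G c x y) :=
        sum_count_mul U S (PF U S Ys) hPsubU (fun x => ∑ y ∈ Uᶜ, wFun G c x y)
      have E5 : ∑ j ∈ Finset.Icc 3 S.card, betaW G c U (RF U S Ys j)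
          = ∑ x ∈ U, ∑ y ∈ U,
              ((((Finset.Icc 3 S.card).filter fun j => x ∈ RF U S Ys j ∧ y ∉ RF U S Ys j).card : ℝ)
                * wFun G c x y) :=
        sum_count_mul2 U (Finset.Icc 3 S.card) (RF U S Ys) hRsubU (wFun G c)
      have E6 : ∑ j ∈ Finset.Icc 3 S.card, gamW G c U (RF U S Ys j)
          = ∑ x ∈ U, ((((Finset.Icc 3 S.card).filter fun j => x ∈ RF U S Ys j).card : ℝ)
              * ∑ y ∈ Uᶜ, wFun G c x y) :=
        sum_count_mul U (Finset.Icc 3 S.card) (RF U S Ys) hRsubU (fun x => ∑ y ∈ Uᶜ, wFun G c x y)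
      have Tpair :
          (∑ x ∈ U, ∑ y ∈ U,
              (((S.filter fun i => x ∈ PF U S Ys i ∧ y ∉ PF U S Ys i).card : ℝ) * wFun G c x y))
          + (∑ x ∈ U, ∑ y ∈ U,
              ((((Finset.Icc 3 S.card).filter fun j => x ∈ RF U S Ys j ∧ y ∉ RF U S Ys j).card : ℝ)
                * wFun G c x y))
          ≤ ∑ x ∈ U, ∑ y ∈ U,
              (((S.filter fun i => x ∈ Ys i ∧ y ∉ Ys i).card : ℝ) * wFun G c x y) := by
        set D : V → V → ℝ := fun x y =>
          ((S.filter fun i => x ∈ Ys i ∧ y ∉ Ys i).card : ℝ)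
          - ((S.filter fun i => x ∈ PF U S Ys i ∧ y ∉ PF U S Ys i).card : ℝ)
          - (((Finset.Icc 3 S.card).filter fun j => x ∈ RF U S Ys j ∧ y ∉ RF U S Ys j).card : ℝ)
          with hD
        have hDpair : ∀ x ∈ U, ∀ y ∈ U, 0 ≤ (D x y + D y x) * wFun G c x y := by
          intro x hx y hy
          apply mul_nonneg _ (wFun_nonneg G c hc x y)
          have hk := key_pair_cards U S Ys x y hx hy
          have hk' := (Nat.cast_le (α := ℝ)).mpr hk
          push_cast at hk'
          simp only [hD]
          linarith
        have hSwap : (∑ x ∈ U, ∑ y ∈ U, D x y * wFun G c x y)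
            = ∑ x ∈ U, ∑ y ∈ U, D y x * wFun G c x y := by
          rw [Finset.sum_comm]
          refine Finset.sum_congr rfl fun x _ => Finset.sum_congr rfl fun y _ => ?_
          rw [wFun_symm G c hcsymm]
        have hDouble : (∑ x ∈ U, ∑ y ∈ U, D x y * wFun G c x y)
            + (∑ x ∈ U, ∑ y ∈ U, D x y * wFun G c x y)
            = ∑ x ∈ U, ∑ y ∈ U, (D x y + D y x) * wFun G c x y := by
          nth_rewrite 2 [hSwap]
          rw [← Finset.sum_add_distrib]
          refine Finset.sum_congr rfl fun x _ => ?_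
          rw [← Finset.sum_add_distrib]
          exact Finset.sum_congr rfl fun y _ => (add_mul _ _ _).symm
        have hApos : 0 ≤ ∑ x ∈ U, ∑ y ∈ U, D x y * wFun G c x y := by
          have h1 : 0 ≤ ∑ x ∈ U, ∑ y ∈ U, (D x y + D y x) * wFun G c x y :=
            Finset.sum_nonneg fun x hx => Finset.sum_nonneg fun y hy => hDpair x hx y hy
          linarith [hDouble]
        have hExpand : ∑ x ∈ U, ∑ y ∈ U, D x y * wFun G c x y
            = (∑ x ∈ U, ∑ y ∈ U,
                (((S.filter fun i => x ∈ Ys i ∧ y ∉ Ys i).card : ℝ) * wFun G c x y))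
              - (∑ x ∈ U, ∑ y ∈ U,
                (((S.filter fun i => x ∈ PF U S Ys i ∧ y ∉ PF U S Ys i).card : ℝ) * wFun G c x y))
              - (∑ x ∈ U, ∑ y ∈ U,
                ((((Finset.Icc 3 S.card).filter fun j => x ∈ RF U S Ys j ∧ y ∉ RF U S Ys j).card : ℝ)
                  * wFun G c x y)) := by
          simp only [hD, sub_mul, Finset.sum_sub_distrib]
        linarith [hApos, hExpand]
      have Tvert :
          (∑ x ∈ U, (((S.filter fun i => x ∈ PF U S Ys i).card : ℝ) * ∑ y ∈ Uᶜ, wFun G c x y))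
          + (∑ x ∈ U, (((S.filter fun i => x ∈ Ys i).card : ℝ) * ∑ y ∈ Uᶜ, wFun G c x y))
          ≤ (∑ x ∈ U, ((((Finset.Icc 3 S.card).filter fun j => x ∈ RF U S Ys j).card : ℝ)
              * ∑ y ∈ Uᶜ, wFun G c x y))
            + 2 * (∑ x ∈ U, ∑ y ∈ Uᶜ, wFun G c x y) := by
        rw [Finset.mul_sum, ← Finset.sum_add_distrib, ← Finset.sum_add_distrib]
        refine Finset.sum_le_sum fun x hx => ?_
        have hg0 : 0 ≤ ∑ y ∈ Uᶜ, wFun G c x y :=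
          Finset.sum_nonneg fun y _ => wFun_nonneg G c hc x y
        have hppx := pp_eq U S Ys x hx
        have hccx := cc_eq U S Ys x hx
        have hnat : (S.filter fun i => x ∈ PF U S Ys i).card + (S.filter fun i => x ∈ Ys i).card
            ≤ ((Finset.Icc 3 S.card).filter fun j => x ∈ RF U S Ys j).card + 2 :=
          key_vertex_nat _ _ _ hppx hccx
        have hcast := (Nat.cast_le (α := ℝ)).mpr hnat
        push_cast at hcast
        have hmul := mul_le_mul_of_nonneg_right hcast hg0
        nlinarith [hmul]
      have hYineq : ∑ s ∈ S, betaW G c U (Ys s) ≤ ∑ s ∈ S, gamW G c U (Ys s) :=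
        Finset.sum_le_sum fun s hs => by linarith [hY2 s hs]
      have hRineq : ∑ j ∈ Finset.Icc 3 S.card, gamW G c U (RF U S Ys j)
          ≤ ∑ j ∈ Finset.Icc 3 S.card, betaW G c U (RF U S Ys j) := by
        refine Finset.sum_le_sum fun j hj => ?_
        by_cases hne : (RF U S Ys j).Nonempty
        · have hj3 : 3 ≤ j := (Finset.mem_Icc.mp hj).1
          have hRS : RF U S Ys j ∩ S = ∅ := by
            rw [Finset.eq_empty_iff_forall_notMem]
            intro v hv
            rw [Finset.mem_inter] at hv
            have h1 : sigF S Ys v = {v} := sigF_of_mem S Ys hY3' hY4' v hv.2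
            have h2 : mF S Ys v = 1 := by rw [mF, h1, Finset.card_singleton]
            have h3 : j ≤ mF S Ys v := (Finset.mem_filter.mp hv.1).2
            omega
          have hnotle : ¬ (betaW G c U (RF U S Ys j) - gamW G c U (RF U S Ys j) ≤ 0) := by
            intro hle
            have h := hTrS (RF U S Ys j) (Finset.filter_subset _ _) hne hle
            rw [hRS] at h
            exact Finset.not_nonempty_empty h
          linarith [not_le.mp hnotle]
        · rw [Finset.not_nonempty_iff_eq_empty] at hne
          rw [hne, betaW_empty, gamW_empty]
      have hPsplit : ∑ s ∈ S, cutVal G c (PF U S Ys s)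
          = ∑ s ∈ S, betaW G c U (PF U S Ys s) + ∑ s ∈ S, gamW G c U (PF U S Ys s) := by
        rw [← Finset.sum_add_distrib]
        exact Finset.sum_congr rfl fun s hs => cutVal_split G c U _ (hPsubU s hs)
      have hcvU : cutVal G c U = ∑ x ∈ U, ∑ y ∈ Uᶜ, wFun G c x y := cutVal_eq_sum G c U
      rw [hPsplit, hcvU, E3, E4]
      rw [E1, E2] at hYineq
      rw [E5, E6] at hRineq
      linarith [Tpair, Tvert, hYineq, hRineq]
    linarith [step1, step2]
  have hSne : S.Nonempty := by
    have hUF : betaW G c U U - gamW G c U U ≤ 0 := by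
      have h1 : betaW G c U U = 0 := by simp [betaW]
      have h2 : 0 ≤ gamW G c U U := gamW_nonneg G c hc U U
      linarith
    obtain ⟨t, ht⟩ := hTrS U (Finset.Subset.refl U) hUne hUF
    exact ⟨t, (Finset.mem_inter.mp ht).2⟩
  refine ⟨S, hSU, hSne, ?_, hunique⟩
  have hle2 : (S.card : ℝ) * lam ≤ (2 * α) * lam := by nlinarith
  have hle : (S.card : ℝ) ≤ 2 * α := le_of_mul_le_mul_right hle2 hlam_pos
  exact (Nat.le_floor hle).trans (Nat.le_succ _)
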